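/- Let Γ be an infinite, finitely generated, residually finite group in which every finitely generated subgroup is either finite or of finite index (locally zero-one). If Γ is not locally finite, then Γ has a just infinite quotient Γ/N such that N is locally finite. -/

import Mathlib

/-- A group is just infinite if it is infinite and every nontrivial normal subgroup has
finite index. -/
def IsJustInfinite (G : Type*) [Group G] : Prop :=
  Infinite G ∧ ∀ N : Subgroup G, N.Normal → N ≠ ⊥ → N.index ≠ 0

/-- A group is residually finite if every nontrivial element survives in some finite
quotient. -/
def IsResiduallyFinite (G : Type*) [Group G] : Prop :=
  ∀ g : G, g ≠ 1 → ∃ N : Subgroup G, N.Normal ∧ N.index ≠ 0 ∧ g ∉ N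

/-- Let `Γ` be an infinite, finitely generated, residually finite group
in which every finitely generated subgroup is either finite or of finite index
("locally zero-one").  If `Γ` is not locally finite, then `Γ` has a just infinite
quotient `Γ ⧸ N` with `N` locally finite. -/
theorem stmt5 (Γ : Type*) [Group Γ] [Infinite Γ] (hfg : Group.FG Γ)
    (hrf : IsResiduallyFinite Γ)
    (hzo : ∀ H : Subgroup Γ, Group.FG H → (Finite H ∨ H.index ≠ 0))
    (hnlf : ¬ (∀ H : Subgroup Γ, Group.FG H → Finite H)) :
    ∃ N : Subgroup Γ, N.Normal ∧
      (∀ hN : N.Normal, IsJustInfinite (Γ ⧸ N)) ∧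
      (∀ H : Subgroup Γ, H ≤ N → Group.FG H → Finite H) := by
  haveI : Group.FG Γ := hfg
  set S : Set (Subgroup Γ) := {N | N.Normal ∧ N.index = 0} with hS
  have hbot : (⊥ : Subgroup Γ) ∈ S := by
    refine ⟨inferInstance, ?_⟩
    rw [Subgroup.index_bot]
    exact Nat.card_eq_zero_of_infinite
  -- Zorn's lemma
  have hzorn : ∀ c ⊆ S, IsChain (· ≤ ·) c → ∀ K ∈ c,
      ∃ ub ∈ S, ∀ z ∈ c, z ≤ ub := by
    intro c hcS hchain K hKc
    refine ⟨sSup c, ⟨?_, ?_⟩, fun z hz => le_sSup hz⟩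
    · -- normal
      constructor
      intro n hn g
      rw [Subgroup.mem_sSup_of_directedOn ⟨K, hKc⟩ hchain.directedOn] at hn ⊢
      obtain ⟨M, hMc, hnM⟩ := hn
      exact ⟨M, hMc, (hcS hMc).1.conj_mem n hnM g⟩
    · -- index zero
      by_contra hidx
      haveI : (sSup c).FiniteIndex := ⟨hidx⟩
      haveI : Group.FG ↥(sSup c) := Subgroup.fg_of_index_ne_zero (H := sSup c)
      obtain ⟨T, hTclos, hTfin⟩ :=
        (Subgroup.fg_iff _).mp ((Group.fg_iff_subgroup_fg _).mp this)
      -- every element of T lies in some member of the chain; find one member containing all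
      have key : ∀ s : Set Γ, s.Finite → s ⊆ ↑(sSup c) → ∃ M ∈ c, s ⊆ ↑M := by
        intro s hs
        refine Set.Finite.induction_on (motive := fun s _ => s ⊆ ↑(sSup c) → ∃ M ∈ c, s ⊆ ↑M) s hs (fun _ => ⟨K, hKc, by simp⟩) ?_
        rintro a s _ _ ih hsub
        obtain ⟨M, hMc, hsM⟩ := ih ((Set.subset_insert a s).trans hsub)
        have ha : a ∈ sSup c := hsub (Set.mem_insert a s)
        rw [Subgroup.mem_sSup_of_directedOn ⟨K, hKc⟩ hchain.directedOn] at ha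
        obtain ⟨M', hM'c, haM'⟩ := ha
        obtain ⟨M'', hM''c, h1, h2⟩ := hchain.directedOn M hMc M' hM'c
        exact ⟨M'', hM''c, Set.insert_subset (h2 haM') (hsM.trans h1)⟩
      obtain ⟨M, hMc, hTM⟩ := key T hTfin (hTclos ▸ Subgroup.subset_closure)
      have : sSup c ≤ M := hTclos ▸ Subgroup.closure_le M |>.mpr hTM
      exact hidx (this.antisymm (le_sSup hMc) ▸ (hcS hMc).2)
  obtain ⟨N, -, hNS, hNmax⟩ := zorn_le_nonempty₀ S hzorn ⊥ hbot
  obtain ⟨hNnorm, hNidx⟩ := hNS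
  haveI := hNnorm
  refine ⟨N, hNnorm, fun _ => ⟨?_, ?_⟩, ?_⟩
  · -- Γ ⧸ N infinite
    have : Nat.card (Γ ⧸ N) = 0 := hNidx
    rcases Nat.card_eq_zero.mp this with h | h
    · exact absurd h (not_isEmpty_of_nonempty _)
    · exact h
  · -- every nontrivial normal subgroup of the quotient has finite index
    intro M hMnorm hMne
    set M' : Subgroup Γ := M.comap (QuotientGroup.mk' N) with hM'
    have hNle : N ≤ M' := fun x hx => by
      simp [hM', Subgroup.mem_comap, (QuotientGroup.eq_one_iff x).mpr hx, M.one_mem]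
    have hne : N ≠ M' := by
      intro h
      apply hMne
      ext x
      obtain ⟨y, rfl⟩ := QuotientGroup.mk'_surjective N x
      simp only [Subgroup.mem_bot]
      constructor
      · intro hy
        have : y ∈ M' := by simpa [hM', Subgroup.mem_comap] using hy
        exact (QuotientGroup.eq_one_iff y).mpr (h ▸ this)
      · intro h1
        rw [h1]; exact M.one_mem
    intro hidx0
    have hM'S : M' ∈ S := ⟨Subgroup.Normal.comap hMnorm _,
      by rwa [hM', Subgroup.index_comap_of_surjective _ (QuotientGroup.mk'_surjective N)]⟩
    exact hne (le_antisymm hNle (hNmax hM'S hNle))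
  · -- N is locally finite
    intro H hHN hHfg
    rcases hzo H hHfg with h | h
    · exact h
    · exact absurd (Nat.eq_zero_of_zero_dvd (hNidx ▸ Subgroup.index_dvd_of_le hHN)) h
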